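/- arXiv:2210.09578 — 3 statements merged into one kernel-verified Lean document; each statement's English description precedes it below -/
import Mathlib

section
/- Let (B_t)_{t≥1} and B be p×p real matrices satisfying: (i) there exist M₁ > 0 and r₁ ∈ (0,1) with ‖B_t − B‖_F ≤ M₁ r₁ᵗ for all t ≥ 1 and ‖Bᵏ‖_F ≤ M₁ r₁ᵏ for all k ≥ 0; (ii) there exists M₃ > 0 such that ‖∏_{i=k}^{l} B_{t−i}‖_F ≤ M₃ for all integers 0 ≤ k ≤ l < t. Then there exist M > 0 and r ∈ (0,1) such that for all t ≥ 1 and all 0 ≤ j ≤ t − 1: ‖B_t B_{t−1} ⋯ B_{t−j}‖_F ≤ M (j+2) r^{j+1}. -/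
open Matrix Set

/-- The Frobenius norm of a real matrix: `‖A‖_F = √(tr (A * Aᵀ))`. -/
noncomputable def frobNorm {m n : Type*} [Fintype m] [Fintype n] (A : Matrix m n ℝ) : ℝ :=
  Real.sqrt (Matrix.trace (A * Aᵀ))

/-- The ordered product `∏_{i=k}^{l} B_{t−i} = B_{t−k} B_{t−k−1} ⋯ B_{t−l}`. -/
noncomputable def ordProd {p : ℕ} (B : ℕ → Matrix (Fin p) (Fin p) ℝ) (t k l : ℕ) :
    Matrix (Fin p) (Fin p) ℝ :=
  ((List.range (l - k + 1)).map fun i => B (t - (k + i))).prod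

attribute [local instance] Matrix.frobeniusSeminormedAddCommGroup Matrix.frobeniusNormedRing


lemma frobNorm_eq {p : ℕ} (A : Matrix (Fin p) (Fin p) ℝ) : frobNorm A = ‖A‖ := by
  rw [frobNorm, Matrix.frobenius_norm_def, ← Real.sqrt_eq_rpow]
  congr 1
  simp only [Matrix.trace, Matrix.diag, Matrix.mul_apply, Matrix.transpose_apply]
  refine Finset.sum_congr rfl fun i _ => Finset.sum_congr rfl fun j _ => ?_
  rw [show (2:ℝ) = ((2:ℕ):ℝ) by norm_num, Real.rpow_natCast]
  simp [Real.norm_eq_abs, sq_abs, sq]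

noncomputable def auxG {p : ℕ} (B : ℕ → Matrix (Fin p) (Fin p) ℝ) (s n : ℕ) :
    Matrix (Fin p) (Fin p) ℝ :=
  ((List.range n).map fun i => B (s - i)).prod

lemma ordProd_eq_auxG {p : ℕ} (B : ℕ → Matrix (Fin p) (Fin p) ℝ) (t k l : ℕ) :
    ordProd B t k l = auxG B (t - k) (l - k + 1) := by
  unfold ordProd auxG
  congr 1
  refine List.map_congr_left fun i _ => ?_
  have h : t - (k + i) = t - k - i := by omega
  rw [h]

lemma auxG_zero {p : ℕ} (B : ℕ → Matrix (Fin p) (Fin p) ℝ) (s : ℕ) : auxG B s 0 = 1 := by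
  simp [auxG]

lemma auxG_succ {p : ℕ} (B : ℕ → Matrix (Fin p) (Fin p) ℝ) (s n : ℕ) :
    auxG B s (n + 1) = B s * auxG B (s - 1) n := by
  unfold auxG
  rw [List.range_succ_eq_map]
  simp only [List.map_cons, List.map_map, List.prod_cons, Nat.sub_zero]
  congr 2
  refine List.map_congr_left fun i _ => ?_
  simp only [Function.comp_apply]
  have h : s - Nat.succ i = s - 1 - i := by omega
  rw [h]

/-- Telescoping identity. -/
lemma auxG_sub_pow {p : ℕ} (B : ℕ → Matrix (Fin p) (Fin p) ℝ) (Blim : Matrix (Fin p) (Fin p) ℝ) :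
    ∀ n s : ℕ, auxG B s n - Blim ^ n =
      ∑ k ∈ Finset.range n, Blim ^ k * ((B (s - k) - Blim) * auxG B (s - k - 1) (n - k - 1)) := by
  intro n
  induction n with
  | zero => intro s; simp [auxG_zero]
  | succ n ih =>
    intro s
    have h1 : auxG B s (n+1) - Blim ^ (n+1) =
        (B s - Blim) * auxG B (s-1) n + Blim * (auxG B (s-1) n - Blim ^ n) := by
      rw [auxG_succ, pow_succ']
      noncomm_ring
    have h2 : ∀ k, Blim * (Blim ^ k * ((B (s - 1 - k) - Blim) * auxG B (s - 1 - k - 1) (n - k - 1)))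
        = Blim ^ (k+1) * ((B (s - (k+1)) - Blim) * auxG B (s - (k+1) - 1) (n + 1 - (k+1) - 1)) := by
      intro k
      rw [← mul_assoc, ← pow_succ']
      have e1 : s - 1 - k = s - (k+1) := by omega
      have e2 : s - 1 - k - 1 = s - (k+1) - 1 := by omega
      have e3 : n - k - 1 = n + 1 - (k+1) - 1 := by omega
      rw [e1, e3]
    have h3 : Blim ^ 0 * ((B (s - 0) - Blim) * auxG B (s - 0 - 1) (n + 1 - 0 - 1))
        = (B s - Blim) * auxG B (s-1) n := by
      simp
    rw [Finset.sum_range_succ', h1, ih (s-1), Finset.mul_sum]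
    simp only [h2]
    rw [h3]
    exact add_comm _ _


/-- Under the same hypotheses as Statement 5, there are `M > 0`,
`r ∈ (0,1)` with `‖B_t B_{t−1} ⋯ B_{t−j}‖_F ≤ M (j+2) r^{j+1}` for all `t ≥ 1`,
`0 ≤ j ≤ t−1`. -/
theorem ordProd_le_geometric
    {p : ℕ} (B : ℕ → Matrix (Fin p) (Fin p) ℝ) (Blim : Matrix (Fin p) (Fin p) ℝ)
    (M₁ r₁ : ℝ) (hM₁ : 0 < M₁) (hr₁ : r₁ ∈ Ioo (0 : ℝ) 1)
    (hB : ∀ t : ℕ, 1 ≤ t → frobNorm (B t - Blim) ≤ M₁ * r₁ ^ t)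
    (hBpow : ∀ k : ℕ, frobNorm (Blim ^ k) ≤ M₁ * r₁ ^ k)
    (M₃ : ℝ) (hM₃ : 0 < M₃)
    (hbdd : ∀ t k l : ℕ, k ≤ l → l < t → frobNorm (ordProd B t k l) ≤ M₃) :
    ∃ M > (0 : ℝ), ∃ r ∈ Ioo (0 : ℝ) 1, ∀ t : ℕ, 1 ≤ t → ∀ j : ℕ, j < t →
      frobNorm (ordProd B t 0 j) ≤ M * (j + 2 : ℝ) * r ^ (j + 1) := by
  obtain ⟨hr₁0, hr₁1⟩ := hr₁
  set M' : ℝ := max M₁ 1 with hM'def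
  set C : ℝ := max M₃ ‖(1 : Matrix (Fin p) (Fin p) ℝ)‖ + 1 with hCdef
  have hM'1 : (1:ℝ) ≤ M' := le_max_right _ _
  have hMM' : M₁ ≤ M' := le_max_left _ _
  have hC1 : (1:ℝ) ≤ C := by
    have : (0:ℝ) ≤ max M₃ ‖(1 : Matrix (Fin p) (Fin p) ℝ)‖ := le_trans hM₃.le (le_max_left _ _)
    linarith
  have hCM₃ : M₃ ≤ C := by
    have := le_max_left M₃ ‖(1 : Matrix (Fin p) (Fin p) ℝ)‖; linarith
  have hCone : ‖(1 : Matrix (Fin p) (Fin p) ℝ)‖ ≤ C := by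
    have := le_max_right M₃ ‖(1 : Matrix (Fin p) (Fin p) ℝ)‖; linarith
  simp only [frobNorm_eq] at hB hBpow hbdd ⊢
  have hB' : ∀ t : ℕ, 1 ≤ t → ‖B t - Blim‖ ≤ M' * r₁ ^ t := fun t ht =>
    (hB t ht).trans (mul_le_mul_of_nonneg_right hMM' (pow_nonneg hr₁0.le t))
  have hBlim : ∀ k : ℕ, ‖Blim ^ k‖ ≤ M' * r₁ ^ k := fun k =>
    (hBpow k).trans (mul_le_mul_of_nonneg_right hMM' (pow_nonneg hr₁0.le k))
  have hGbdd : ∀ s n : ℕ, n ≤ s → ‖auxG B s n‖ ≤ C := by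
    intro s n hns
    rcases Nat.eq_zero_or_pos n with h0 | h1
    · subst h0; rw [auxG_zero]; exact hCone
    · have h := hbdd s 0 (n-1) (Nat.zero_le _) (by omega)
      rw [ordProd_eq_auxG] at h
      have e : n - 1 - 0 + 1 = n := by omega
      rw [Nat.sub_zero, e] at h
      exact h.trans hCM₃
  refine ⟨M' * M' * C, by positivity, r₁, ⟨hr₁0, hr₁1⟩, ?_⟩
  intro t ht j hjt
  rw [ordProd_eq_auxG, Nat.sub_zero, Nat.sub_zero]
  set n := j + 1 with hn
  have hnt : n ≤ t := by omega
  set q : ℝ := r₁ ^ n with hq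
  have hq0 : 0 ≤ q := pow_nonneg hr₁0.le n
  have hrt : r₁ ^ t ≤ q := pow_le_pow_of_le_one hr₁0.le hr₁1.le hnt
  have key : ‖auxG B t n - Blim ^ n‖ ≤ (n : ℝ) * (M' * (M' * C) * r₁ ^ t) := by
    rw [auxG_sub_pow]
    refine le_trans (norm_sum_le _ _) ?_
    have hterm : ∀ k ∈ Finset.range n,
        ‖Blim ^ k * ((B (t - k) - Blim) * auxG B (t - k - 1) (n - k - 1))‖
          ≤ M' * (M' * C) * r₁ ^ t := by
      intro k hk
      have hkn : k < n := Finset.mem_range.mp hk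
      have h1 : (1:ℕ) ≤ t - k := by omega
      have htail : ‖auxG B (t - k - 1) (n - k - 1)‖ ≤ C := hGbdd _ _ (by omega)
      have hnormBk : ‖Blim ^ k‖ ≤ M' * r₁ ^ k := hBlim k
      have hnormE : ‖B (t - k) - Blim‖ ≤ M' * r₁ ^ (t - k) := hB' _ h1
      have step1 : ‖(B (t - k) - Blim) * auxG B (t - k - 1) (n - k - 1)‖
          ≤ (M' * r₁ ^ (t - k)) * C := by
        refine le_trans (norm_mul_le _ _) ?_
        exact mul_le_mul hnormE htail (norm_nonneg _) (by positivity)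
      have step2 : ‖Blim ^ k * ((B (t - k) - Blim) * auxG B (t - k - 1) (n - k - 1))‖
          ≤ (M' * r₁ ^ k) * ((M' * r₁ ^ (t - k)) * C) := by
        refine le_trans (norm_mul_le _ _) ?_
        exact mul_le_mul hnormBk step1 (norm_nonneg _) (by positivity)
      refine step2.trans (le_of_eq ?_)
      have hpk : r₁ ^ k * r₁ ^ (t - k) = r₁ ^ t := by
        rw [← pow_add]; congr 1; omega
      rw [← hpk]; ring
    calc ∑ k ∈ Finset.range n, ‖Blim ^ k * ((B (t - k) - Blim) * auxG B (t - k - 1) (n - k - 1))‖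
        ≤ ∑ _k ∈ Finset.range n, (M' * (M' * C) * r₁ ^ t) := Finset.sum_le_sum hterm
      _ = (n : ℝ) * (M' * (M' * C) * r₁ ^ t) := by
          rw [Finset.sum_const, Finset.card_range, nsmul_eq_mul]
  have hfinal : ‖auxG B t n‖ ≤ M' * q + (n : ℝ) * (M' * (M' * C) * q) := by
    have h0 : ‖auxG B t n‖ ≤ ‖Blim ^ n‖ + ‖auxG B t n - Blim ^ n‖ := by
      have := norm_add_le (Blim ^ n) (auxG B t n - Blim ^ n)
      simpa using this
    have h2 : (n : ℝ) * (M' * (M' * C) * r₁ ^ t) ≤ (n : ℝ) * (M' * (M' * C) * q) := by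
      have hn0 : (0:ℝ) ≤ (n:ℝ) := Nat.cast_nonneg n
      have : M' * (M' * C) * r₁ ^ t ≤ M' * (M' * C) * q :=
        mul_le_mul_of_nonneg_left hrt (by positivity)
      exact mul_le_mul_of_nonneg_left this hn0
    calc ‖auxG B t n‖ ≤ ‖Blim ^ n‖ + ‖auxG B t n - Blim ^ n‖ := h0
      _ ≤ M' * q + (n : ℝ) * (M' * (M' * C) * r₁ ^ t) := add_le_add (hBlim n) key
      _ ≤ M' * q + (n : ℝ) * (M' * (M' * C) * q) := by linarith
  refine hfinal.trans ?_
  have hcast : (n : ℝ) = (j : ℝ) + 1 := by push_cast [hn]; ring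
  have hMle : M' ≤ M' * M' * C := by nlinarith
  rw [hcast]
  nlinarith [mul_nonneg (sub_nonneg.mpr hMle) hq0, mul_nonneg (Nat.cast_nonneg j : (0:ℝ) ≤ (j:ℝ)) hq0]
end

section
/- In the time-invariant misspecified Kalman setting, assume that for every t there is a deterministic d×d matrix F_t with E[v_t v_tᵀ | 𝔉_{t−1}] = F_t almost surely. Then for every t ≥ 1 the cross-covariance matrix Cov(v'_t, a_{t+1} − a'_{t+1}) := E[(v'_t − E v'_t)(a_{t+1} − a'_{t+1} − E(a_{t+1} − a'_{t+1}))ᵀ] satisfies the identity Cov(v'_t, a_{t+1} − a'_{t+1}) = F_t (T(K_t − K'_t))ᵀ + Z · Var(a_t − a'_t) · (T L'_t)ᵀ, where Var(a_t − a'_t) := E[(a_t − a'_t)(a_t − a'_t)ᵀ] − E[a_t − a'_t] E[a_t − a'_t]ᵀ. -/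
open Matrix MeasureTheory

section Aux
variable {Ω : Type*} {m0 : MeasurableSpace Ω} {μ : Measure Ω}

lemma aux_memLp_apply {n : ℕ} {f : Ω → Fin n → ℝ} (hf : MemLp f 2 μ) (i : Fin n) :
    MemLp (fun ω => f ω i) 2 μ :=
  ((ContinuousLinearMap.proj (R := ℝ) (φ := fun _ : Fin n => ℝ) i).comp_memLp' hf)

lemma aux_memLp_mulVec {n k : ℕ} (A : Matrix (Fin k) (Fin n) ℝ) {f : Ω → Fin n → ℝ}
    (hf : MemLp f 2 μ) : MemLp (fun ω => A.mulVec (f ω)) 2 μ :=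
  ((Matrix.mulVecLin A).toContinuousLinearMap.comp_memLp' hf)

lemma aux_integrable_mul {f g : Ω → ℝ} (hf : MemLp f 2 μ) (hg : MemLp g 2 μ) :
    Integrable (fun ω => f ω * g ω) μ := by
  have h : MemLp (f • g) 1 μ := hg.smul hf (hpqr := ⟨by simp [ENNReal.inv_two_add_inv_two]⟩)
  rw [memLp_one_iff_integrable] at h
  exact h

end Aux

lemma aux_condexp_apply {Ω : Type*} {m m0 : MeasurableSpace Ω} {μ : Measure Ω}
    (hm : m ≤ m0) [SigmaFinite (μ.trim hm)]
    {n : ℕ} {f : Ω → Fin n → ℝ} (hf : Integrable f μ) (i : Fin n) :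
    μ[fun ω => f ω i | m] =ᵐ[μ] fun ω => (μ[f | m]) ω i := by
  set L : (Fin n → ℝ) →L[ℝ] ℝ := ContinuousLinearMap.proj i
  refine (ae_eq_condExp_of_forall_setIntegral_eq hm (L.integrable_comp hf)
    (fun s _ _ => (L.integrable_comp integrable_condExp).integrableOn)
    (fun s hs hμs => ?_)
    (((continuous_apply i).comp_stronglyMeasurable
      (stronglyMeasurable_condExp (f := f) (μ := μ) (m := m))).aestronglyMeasurable)).symm
  calc ∫ x in s, (μ[f|m]) x i ∂μ = L (∫ x in s, (μ[f|m]) x ∂μ) :=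
        L.integral_comp_comm integrable_condExp.integrableOn
    _ = L (∫ x in s, f x ∂μ) := by rw [setIntegral_condExp hm hf hs]
    _ = ∫ x in s, f x i ∂μ := (L.integral_comp_comm hf.integrableOn).symm

lemma aux_alg {d p : ℕ} (A : ℝ) (vv : Fin d → ℝ) (e Eb : Fin p → ℝ)
    (Zi : Fin p → ℝ) (Mj : Fin d → ℝ) (Nj : Fin p → ℝ) :
    (A + ∑ k, Zi k * e k - ∑ k, Zi k * Eb k)
      * ((∑ l, Mj l * vv l) + ∑ k, Nj k * e k - ∑ k, Nj k * Eb k)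
    = (∑ l, Mj l * (A * vv l))
      + (∑ l, Nj l * (A * (e l - Eb l)))
      + (∑ k, ∑ l, Zi k * Mj l * ((e k - Eb k) * vv l))
      + ∑ k, ∑ l, Zi k * Nj l * ((e k - Eb k) * (e l - Eb l)) := by
  have h1 : ∑ k, Zi k * e k - ∑ k, Zi k * Eb k = ∑ k, Zi k * (e k - Eb k) := by
    rw [← Finset.sum_sub_distrib]
    exact Finset.sum_congr rfl fun k _ => (mul_sub _ _ _).symm
  have h2 : ∑ k, Nj k * e k - ∑ k, Nj k * Eb k = ∑ k, Nj k * (e k - Eb k) := by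
    rw [← Finset.sum_sub_distrib]
    exact Finset.sum_congr rfl fun k _ => (mul_sub _ _ _).symm
  rw [add_sub_assoc, add_sub_assoc, h1, h2]
  have hR1 : A * ∑ l, Mj l * vv l = ∑ l, Mj l * (A * vv l) := by
    rw [Finset.mul_sum]; exact Finset.sum_congr rfl fun l _ => by ring
  have hR2 : A * ∑ k, Nj k * (e k - Eb k) = ∑ l, Nj l * (A * (e l - Eb l)) := by
    rw [Finset.mul_sum]
    exact Finset.sum_congr rfl fun l _ => by ring
  have hR3 : (∑ k, Zi k * (e k - Eb k)) * ∑ l, Mj l * vv l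
      = ∑ k, ∑ l, Zi k * Mj l * ((e k - Eb k) * vv l) := by
    rw [Finset.sum_mul]
    refine Finset.sum_congr rfl fun k _ => ?_
    rw [Finset.mul_sum]
    exact Finset.sum_congr rfl fun l _ => by ring
  have hR4 : (∑ k, Zi k * (e k - Eb k)) * ∑ l, Nj l * (e l - Eb l)
      = ∑ k, ∑ l, Zi k * Nj l * ((e k - Eb k) * (e l - Eb l)) := by
    rw [Finset.sum_mul]
    refine Finset.sum_congr rfl fun k _ => ?_
    rw [Finset.mul_sum]
    exact Finset.sum_congr rfl fun l _ => by ring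
  rw [← hR1, ← hR2, ← hR3, ← hR4]
  ring

/-- In the time-invariant misspecified Kalman setting, with deterministic
`F_t = E[v_t v_tᵀ | 𝔉_{t−1}]`, the cross-covariance matrix satisfies
`Cov(v'_t, a_{t+1} − a'_{t+1}) = F_t (T(K_t − K'_t))ᵀ + Z Var(a_t − a'_t) (T L'_t)ᵀ`. -/
theorem cov_misspecified_error_state_diff
    {Ω : Type*} {m0 : MeasurableSpace Ω} (μ : Measure Ω) [IsProbabilityMeasure μ]
    (ℱ : Filtration ℕ m0) (hℱ0 : ℱ 0 = ⊥)
    {d p : ℕ}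
    (Z : Matrix (Fin d) (Fin p) ℝ) (T : Matrix (Fin p) (Fin p) ℝ)
    (K K' : ℕ → Matrix (Fin p) (Fin d) ℝ)
    (L' : ℕ → Matrix (Fin p) (Fin p) ℝ)
    (hL' : ∀ t, L' t = 1 - K' t * Z)
    (y : ℕ → Ω → Fin d → ℝ)
    (hy_meas : ∀ t, StronglyMeasurable[ℱ t] (y t))
    (hy_L2 : ∀ t, MemLp (y t) 2 μ)
    (a a' : ℕ → Ω → Fin p → ℝ)
    (a₁ a₁' : Fin p → ℝ)
    (ha1 : ∀ ω, a 1 ω = a₁) (ha1' : ∀ ω, a' 1 ω = a₁')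
    (ha : ∀ t, 1 ≤ t → ∀ ω,
      a (t + 1) ω = T.mulVec (a t ω) + T.mulVec ((K t).mulVec (y t ω - Z.mulVec (a t ω))))
    (ha' : ∀ t, 1 ≤ t → ∀ ω,
      a' (t + 1) ω
        = T.mulVec (a' t ω) + T.mulVec ((K' t).mulVec (y t ω - Z.mulVec (a' t ω))))
    (ha_L2 : ∀ t, MemLp (a t) 2 μ) (ha'_L2 : ∀ t, MemLp (a' t) 2 μ)
    (v v' : ℕ → Ω → Fin d → ℝ)
    (hv : ∀ t ω, v t ω = y t ω - Z.mulVec (a t ω))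
    (hv' : ∀ t ω, v' t ω = y t ω - Z.mulVec (a' t ω))
    (hcond : ∀ t, 1 ≤ t → μ[y t | ℱ (t - 1)] =ᵐ[μ] fun ω => Z.mulVec (a t ω))
    (F : ℕ → Matrix (Fin d) (Fin d) ℝ)
    (hF : ∀ t, 1 ≤ t → ∀ i j,
      μ[fun ω => v t ω i * v t ω j | ℱ (t - 1)] =ᵐ[μ] fun _ => F t i j) :
    ∀ t, 1 ≤ t →
      (Matrix.of fun i j =>
          ∫ ω, (v' t ω i - ∫ ω', v' t ω' i ∂μ)
            * ((a (t + 1) ω j - a' (t + 1) ω j)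
              - ∫ ω', (a (t + 1) ω' j - a' (t + 1) ω' j) ∂μ) ∂μ)
      = F t * (T * (K t - K' t))ᵀ
        + Z * ((Matrix.of fun i j => ∫ ω, (a t ω i - a' t ω i) * (a t ω j - a' t ω j) ∂μ)
            - Matrix.of fun i j =>
              (∫ ω, (a t ω i - a' t ω i) ∂μ) * ∫ ω, (a t ω j - a' t ω j) ∂μ)
          * (T * L' t)ᵀ := by
  -- measurability of the state estimates
  have hameas : ∀ s, 1 ≤ s →
      StronglyMeasurable[ℱ (s - 1)] (a s) ∧ StronglyMeasurable[ℱ (s - 1)] (a' s) := by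
    intro s hs
    induction s, hs using Nat.le_induction with
    | base =>
        constructor
        · have h : a 1 = fun _ => a₁ := funext ha1
          rw [h]; exact stronglyMeasurable_const
        · have h : a' 1 = fun _ => a₁' := funext ha1'
          rw [h]; exact stronglyMeasurable_const
    | succ n hn ih =>
        have hmul : ∀ {q r : ℕ} (A : Matrix (Fin q) (Fin r) ℝ) (g : Ω → Fin r → ℝ),
            StronglyMeasurable[ℱ n] g → StronglyMeasurable[ℱ n] (fun ω => A.mulVec (g ω)) := by
          intro q r A g hg
          exact (continuous_const.matrix_mulVec continuous_id).comp_stronglyMeasurable hg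
        have han : StronglyMeasurable[ℱ n] (a n) := ih.1.mono (ℱ.mono (Nat.sub_le n 1))
        have han' : StronglyMeasurable[ℱ n] (a' n) := ih.2.mono (ℱ.mono (Nat.sub_le n 1))
        have hyn : StronglyMeasurable[ℱ n] (y n) := hy_meas n
        show StronglyMeasurable[ℱ n] (a (n + 1)) ∧ StronglyMeasurable[ℱ n] (a' (n + 1))
        constructor
        · have h : a (n + 1) = fun ω =>
              T.mulVec (a n ω) + T.mulVec ((K n).mulVec (y n ω - Z.mulVec (a n ω))) :=
            funext (ha n hn)
          rw [h]
          exact (hmul T _ han).add (hmul T _ (hmul (K n) _ (hyn.sub (hmul Z _ han))))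
        · have h : a' (n + 1) = fun ω =>
              T.mulVec (a' n ω) + T.mulVec ((K' n).mulVec (y n ω - Z.mulVec (a' n ω))) :=
            funext (ha' n hn)
          rw [h]
          exact (hmul T _ han').add (hmul T _ (hmul (K' n) _ (hyn.sub (hmul Z _ han'))))
  intro t ht
  have hm : ℱ (t - 1) ≤ m0 := ℱ.le _
  -- L² facts
  have hv_L2 : MemLp (v t) 2 μ := by
    have h : v t = fun ω => y t ω - Z.mulVec (a t ω) := funext (hv t)
    rw [h]; exact (hy_L2 t).sub (aux_memLp_mulVec Z (ha_L2 t))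
  have hvi : ∀ i, MemLp (fun ω => v t ω i) 2 μ := fun i => aux_memLp_apply hv_L2 i
  have he_L2 : ∀ k, MemLp (fun ω => a t ω k - a' t ω k) 2 μ := fun k =>
    (aux_memLp_apply (ha_L2 t) k).sub (aux_memLp_apply (ha'_L2 t) k)
  have hec_L2 : ∀ k, MemLp
      (fun ω => (a t ω k - a' t ω k) - ∫ ω', (a t ω' k - a' t ω' k) ∂μ) 2 μ := fun k =>
    (he_L2 k).sub (memLp_const _)
  -- measurability of e components
  have he_meas : ∀ k, StronglyMeasurable[ℱ (t - 1)] (fun ω => a t ω k - a' t ω k) := fun k =>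
    (continuous_apply k).comp_stronglyMeasurable ((hameas t ht).1.sub (hameas t ht).2)
  -- conditional expectation of v is 0
  have hvc : ∀ i, μ[fun ω => v t ω i | ℱ (t - 1)] =ᵐ[μ] fun _ => (0 : ℝ) := by
    intro i
    have hgsm : StronglyMeasurable[ℱ (t - 1)] (fun ω => Z.mulVec (a t ω) i) :=
      (continuous_apply i).comp_stronglyMeasurable
        ((continuous_const.matrix_mulVec continuous_id).comp_stronglyMeasurable
          (hameas t ht).1)
    have hgint : Integrable (fun ω => Z.mulVec (a t ω) i) μ :=
      (aux_memLp_apply (aux_memLp_mulVec Z (ha_L2 t)) i).integrable one_le_two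
    have hyint : Integrable (y t) μ := (hy_L2 t).integrable one_le_two
    have hyi : μ[fun ω => y t ω i | ℱ (t - 1)] =ᵐ[μ] fun ω => Z.mulVec (a t ω) i := by
      refine (aux_condexp_apply hm hyint i).trans ?_
      filter_upwards [hcond t ht] with ω h using congrFun h i
    have hsplit : (fun ω => v t ω i)
        = (fun ω => y t ω i) - fun ω => Z.mulVec (a t ω) i := by
      funext ω; simp [hv t ω]
    rw [hsplit]
    refine (condExp_sub ((aux_memLp_apply (hy_L2 t) i).integrable one_le_two) hgint _).trans ?_
    have h2 := condExp_of_stronglyMeasurable hm hgsm hgint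
    filter_upwards [hyi] with ω h1
    simp [Pi.sub_apply, h1, congrFun h2 ω]
  -- basic integral identities
  have Iv : ∀ i, ∫ ω, v t ω i ∂μ = 0 := by
    intro i
    rw [← integral_condExp hm (f := fun ω => v t ω i), integral_congr_ae (hvc i)]
    simp
  have Ivv : ∀ i l, ∫ ω, v t ω i * v t ω l ∂μ = F t i l := by
    intro i l
    rw [← integral_condExp hm (f := fun ω => v t ω i * v t ω l),
      integral_congr_ae (hF t ht i l)]
    simp
  have Iev : ∀ k i, ∫ ω, (a t ω k - a' t ω k) * v t ω i ∂μ = 0 := by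
    intro k i
    have hint : Integrable (fun ω => (a t ω k - a' t ω k) * v t ω i) μ :=
      aux_integrable_mul (he_L2 k) (hvi i)
    have hmul : μ[fun ω => (a t ω k - a' t ω k) * v t ω i | ℱ (t - 1)]
        =ᵐ[μ] (fun ω => a t ω k - a' t ω k) * μ[fun ω => v t ω i | ℱ (t - 1)] :=
      condExp_mul_of_stronglyMeasurable_left (μ := μ) (he_meas k)
        (f := fun ω => a t ω k - a' t ω k) (g := fun ω => v t ω i)
        hint ((hvi i).integrable one_le_two)
    rw [← integral_condExp hm (f := fun ω => (a t ω k - a' t ω k) * v t ω i)]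
    have h0 : μ[fun ω => (a t ω k - a' t ω k) * v t ω i | ℱ (t - 1)]
        =ᵐ[μ] fun _ => (0 : ℝ) := by
      refine hmul.trans ?_
      filter_upwards [hvc i] with ω h
      simp [Pi.mul_apply, h]
    rw [integral_congr_ae h0]
    simp
  -- more integral identities
  have Ive : ∀ i k, ∫ ω, v t ω i * (a t ω k - a' t ω k) ∂μ = 0 := by
    intro i k
    rw [← Iev k i]
    exact integral_congr_ae (Filter.Eventually.of_forall fun ω => mul_comm _ _)
  have Ivec : ∀ i l, ∫ ω, v t ω i * ((a t ω l - a' t ω l)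
      - ∫ ω', (a t ω' l - a' t ω' l) ∂μ) ∂μ = 0 := by
    intro i l
    set c := ∫ ω', (a t ω' l - a' t ω' l) ∂μ with hcdef
    have h : (fun ω => v t ω i * ((a t ω l - a' t ω l) - c))
        = fun ω => v t ω i * (a t ω l - a' t ω l) - c * v t ω i := funext fun ω => by ring
    rw [h, integral_sub (aux_integrable_mul (hvi i) (he_L2 l))
      (((hvi i).integrable one_le_two).const_mul c), integral_const_mul, Ive i l, Iv i]
    ring
  have Ievc : ∀ k l, ∫ ω, ((a t ω k - a' t ω k)
      - ∫ ω', (a t ω' k - a' t ω' k) ∂μ) * v t ω l ∂μ = 0 := by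
    intro k l
    set c := ∫ ω', (a t ω' k - a' t ω' k) ∂μ with hcdef
    have h : (fun ω => ((a t ω k - a' t ω k) - c) * v t ω l)
        = fun ω => (a t ω k - a' t ω k) * v t ω l - c * v t ω l := funext fun ω => by ring
    rw [h, integral_sub (aux_integrable_mul (he_L2 k) (hvi l))
      (((hvi l).integrable one_le_two).const_mul c), integral_const_mul, Iev k l, Iv l]
    ring
  have Ieec : ∀ k l, ∫ ω, ((a t ω k - a' t ω k) - ∫ ω', (a t ω' k - a' t ω' k) ∂μ)
        * ((a t ω l - a' t ω l) - ∫ ω', (a t ω' l - a' t ω' l) ∂μ) ∂μ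
      = (∫ ω, (a t ω k - a' t ω k) * (a t ω l - a' t ω l) ∂μ)
        - (∫ ω, (a t ω k - a' t ω k) ∂μ) * ∫ ω, (a t ω l - a' t ω l) ∂μ := by
    intro k l
    set c := ∫ ω', (a t ω' k - a' t ω' k) ∂μ with hcdef
    set c2 := ∫ ω', (a t ω' l - a' t ω' l) ∂μ with hc2def
    have h : (fun ω => ((a t ω k - a' t ω k) - c) * ((a t ω l - a' t ω l) - c2))
        = fun ω => ((a t ω k - a' t ω k) * (a t ω l - a' t ω l)
            - c2 * (a t ω k - a' t ω k)) - (c * (a t ω l - a' t ω l) - c * c2) :=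
      funext fun ω => by ring
    have i1 : Integrable (fun ω => (a t ω k - a' t ω k) * (a t ω l - a' t ω l)
        - c2 * (a t ω k - a' t ω k)) μ :=
      (aux_integrable_mul (he_L2 k) (he_L2 l)).sub
        (((he_L2 k).integrable one_le_two).const_mul c2)
    have i2 : Integrable (fun ω => c * (a t ω l - a' t ω l) - c * c2) μ :=
      (((he_L2 l).integrable one_le_two).const_mul c).sub (integrable_const (c * c2))
    rw [h, integral_sub i1 i2,
      integral_sub (aux_integrable_mul (he_L2 k) (he_L2 l))
        (((he_L2 k).integrable one_le_two).const_mul c2),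
      integral_sub (((he_L2 l).integrable one_le_two).const_mul c) (integrable_const (c * c2)),
      integral_const_mul, integral_const_mul, integral_const]
    simp only [measure_univ, probReal_univ, ENNReal.toReal_one, smul_eq_mul, one_mul, mul_one]
    ring
  -- structural identities
  have hv'i : ∀ ω i, v' t ω i = v t ω i + ∑ k, Z i k * (a t ω k - a' t ω k) := by
    intro ω i
    have hvec : v' t ω = v t ω + Z.mulVec (a t ω - a' t ω) := by
      rw [hv t ω, hv' t ω, Matrix.mulVec_sub]; abel
    have h := congrFun hvec i
    simpa [Matrix.mulVec, dotProduct] using h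
  have hXvec : ∀ ω, a (t + 1) ω - a' (t + 1) ω
      = (T * (K t - K' t)).mulVec (v t ω) + (T * L' t).mulVec (a t ω - a' t ω) := by
    intro ω
    rw [ha t ht ω, ha' t ht ω, hL']
    have h1 : y t ω - Z.mulVec (a t ω) = v t ω := (hv t ω).symm
    have h2 : y t ω - Z.mulVec (a' t ω) = v t ω + Z.mulVec (a t ω - a' t ω) := by
      rw [hv t ω, Matrix.mulVec_sub]; abel
    rw [h1, h2]
    simp only [← Matrix.mulVec_mulVec, Matrix.sub_mulVec, Matrix.add_mulVec,
      Matrix.one_mulVec, Matrix.mulVec_add, Matrix.mulVec_sub]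
    abel
  have hXj : ∀ ω j, a (t + 1) ω j - a' (t + 1) ω j
      = (∑ l, (T * (K t - K' t)) j l * v t ω l)
        + ∑ k, (T * L' t) j k * (a t ω k - a' t ω k) := by
    intro ω j
    have h := congrFun (hXvec ω) j
    simpa [Matrix.mulVec, dotProduct] using h
  -- means
  have hc : ∀ i, ∫ ω, v' t ω i ∂μ
      = ∑ k, Z i k * ∫ ω', (a t ω' k - a' t ω' k) ∂μ := by
    intro i
    have h : (fun ω => v' t ω i)
        = fun ω => v t ω i + ∑ k, Z i k * (a t ω k - a' t ω k) :=
      funext fun ω => hv'i ω i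
    rw [h, integral_add ((hvi i).integrable one_le_two)
        (integrable_finset_sum _ fun k _ => ((he_L2 k).integrable one_le_two).const_mul _),
      integral_finset_sum _ (fun k _ => ((he_L2 k).integrable one_le_two).const_mul _),
      Iv i, zero_add]
    exact Finset.sum_congr rfl fun k _ => integral_const_mul _ _
  have hxb : ∀ j, ∫ ω, (a (t + 1) ω j - a' (t + 1) ω j) ∂μ
      = ∑ k, (T * L' t) j k * ∫ ω', (a t ω' k - a' t ω' k) ∂μ := by
    intro j
    have h : (fun ω => a (t + 1) ω j - a' (t + 1) ω j)
        = fun ω => (∑ l, (T * (K t - K' t)) j l * v t ω l)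
            + ∑ k, (T * L' t) j k * (a t ω k - a' t ω k) :=
      funext fun ω => hXj ω j
    rw [h, integral_add
        (integrable_finset_sum _ fun l _ => ((hvi l).integrable one_le_two).const_mul _)
        (integrable_finset_sum _ fun k _ => ((he_L2 k).integrable one_le_two).const_mul _),
      integral_finset_sum _ (fun l _ => ((hvi l).integrable one_le_two).const_mul _),
      integral_finset_sum _ (fun k _ => ((he_L2 k).integrable one_le_two).const_mul _)]
    have h0 : ∑ l, ∫ ω, (T * (K t - K' t)) j l * v t ω l ∂μ = 0 := by
      refine Finset.sum_eq_zero fun l _ => ?_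
      rw [integral_const_mul, Iv l, mul_zero]
    rw [h0, zero_add]
    exact Finset.sum_congr rfl fun k _ => integral_const_mul _ _
  -- final entrywise computation
  set M := T * (K t - K' t) with hM
  set N := T * L' t with hN
  ext i j
  simp only [Matrix.of_apply, Matrix.add_apply, Matrix.mul_apply, Matrix.transpose_apply,
    Matrix.sub_apply]
  rw [hc i, hxb j]
  have hpt : ∀ ω, (v' t ω i - ∑ k, Z i k * ∫ ω', (a t ω' k - a' t ω' k) ∂μ)
        * ((a (t + 1) ω j - a' (t + 1) ω j)
          - ∑ k, N j k * ∫ ω', (a t ω' k - a' t ω' k) ∂μ)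
      = (∑ l, M j l * (v t ω i * v t ω l))
        + (∑ l, N j l * (v t ω i * ((a t ω l - a' t ω l) - ∫ ω', (a t ω' l - a' t ω' l) ∂μ)))
        + (∑ k, ∑ l, Z i k * M j l
            * (((a t ω k - a' t ω k) - ∫ ω', (a t ω' k - a' t ω' k) ∂μ) * v t ω l))
        + ∑ k, ∑ l, Z i k * N j l
            * (((a t ω k - a' t ω k) - ∫ ω', (a t ω' k - a' t ω' k) ∂μ)
              * ((a t ω l - a' t ω l) - ∫ ω', (a t ω' l - a' t ω' l) ∂μ)) := by
    intro ω
    rw [hv'i ω i, hXj ω j]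
    exact aux_alg (v t ω i) (fun l => v t ω l) (fun k => a t ω k - a' t ω k)
      (fun k => ∫ ω', (a t ω' k - a' t ω' k) ∂μ) (fun k => Z i k) (fun l => M j l)
      (fun k => N j k)
  rw [funext hpt]
  have int1 : Integrable (fun ω => ∑ l, M j l * (v t ω i * v t ω l)) μ :=
    integrable_finset_sum _ fun l _ => (aux_integrable_mul (hvi i) (hvi l)).const_mul _
  have int2 : Integrable (fun ω => ∑ l, N j l
      * (v t ω i * ((a t ω l - a' t ω l) - ∫ ω', (a t ω' l - a' t ω' l) ∂μ))) μ :=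
    integrable_finset_sum _ fun l _ => (aux_integrable_mul (hvi i) (hec_L2 l)).const_mul _
  have int3 : Integrable (fun ω => ∑ k, ∑ l, Z i k * M j l
      * (((a t ω k - a' t ω k) - ∫ ω', (a t ω' k - a' t ω' k) ∂μ) * v t ω l)) μ :=
    integrable_finset_sum _ fun k _ => integrable_finset_sum _ fun l _ =>
      (aux_integrable_mul (hec_L2 k) (hvi l)).const_mul _
  have int4 : Integrable (fun ω => ∑ k, ∑ l, Z i k * N j l
      * (((a t ω k - a' t ω k) - ∫ ω', (a t ω' k - a' t ω' k) ∂μ)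
        * ((a t ω l - a' t ω l) - ∫ ω', (a t ω' l - a' t ω' l) ∂μ))) μ :=
    integrable_finset_sum _ fun k _ => integrable_finset_sum _ fun l _ =>
      (aux_integrable_mul (hec_L2 k) (hec_L2 l)).const_mul _
  have int12 : Integrable (fun ω => (∑ l, M j l * (v t ω i * v t ω l))
      + ∑ l, N j l * (v t ω i * ((a t ω l - a' t ω l)
          - ∫ ω', (a t ω' l - a' t ω' l) ∂μ))) μ := int1.add int2
  have int123 : Integrable (fun ω => ((∑ l, M j l * (v t ω i * v t ω l))
      + ∑ l, N j l * (v t ω i * ((a t ω l - a' t ω l)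
          - ∫ ω', (a t ω' l - a' t ω' l) ∂μ)))
      + ∑ k, ∑ l, Z i k * M j l
          * (((a t ω k - a' t ω k) - ∫ ω', (a t ω' k - a' t ω' k) ∂μ) * v t ω l)) μ :=
    int12.add int3
  rw [integral_add int123 int4, integral_add int12 int3, integral_add int1 int2]
  have E1 : ∫ ω, ∑ l, M j l * (v t ω i * v t ω l) ∂μ = ∑ l, M j l * F t i l := by
    rw [integral_finset_sum _ fun l _ => (aux_integrable_mul (hvi i) (hvi l)).const_mul _]
    exact Finset.sum_congr rfl fun l _ => by rw [integral_const_mul, Ivv i l]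
  have E2 : ∫ ω, ∑ l, N j l
      * (v t ω i * ((a t ω l - a' t ω l) - ∫ ω', (a t ω' l - a' t ω' l) ∂μ)) ∂μ = 0 := by
    rw [integral_finset_sum _ fun l _ => (aux_integrable_mul (hvi i) (hec_L2 l)).const_mul _]
    exact Finset.sum_eq_zero fun l _ => by rw [integral_const_mul, Ivec i l, mul_zero]
  have E3 : ∫ ω, ∑ k, ∑ l, Z i k * M j l
      * (((a t ω k - a' t ω k) - ∫ ω', (a t ω' k - a' t ω' k) ∂μ) * v t ω l) ∂μ = 0 := by
    rw [integral_finset_sum _ fun k _ => integrable_finset_sum _ fun l _ =>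
      (aux_integrable_mul (hec_L2 k) (hvi l)).const_mul _]
    refine Finset.sum_eq_zero fun k _ => ?_
    rw [integral_finset_sum _ fun l _ => (aux_integrable_mul (hec_L2 k) (hvi l)).const_mul _]
    exact Finset.sum_eq_zero fun l _ => by rw [integral_const_mul, Ievc k l, mul_zero]
  have E4 : ∫ ω, ∑ k, ∑ l, Z i k * N j l
      * (((a t ω k - a' t ω k) - ∫ ω', (a t ω' k - a' t ω' k) ∂μ)
        * ((a t ω l - a' t ω l) - ∫ ω', (a t ω' l - a' t ω' l) ∂μ)) ∂μ
      = ∑ k, ∑ l, Z i k * N j l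
          * ((∫ ω, (a t ω k - a' t ω k) * (a t ω l - a' t ω l) ∂μ)
            - (∫ ω, (a t ω k - a' t ω k) ∂μ) * ∫ ω, (a t ω l - a' t ω l) ∂μ) := by
    rw [integral_finset_sum _ fun k _ => integrable_finset_sum _ fun l _ =>
      (aux_integrable_mul (hec_L2 k) (hec_L2 l)).const_mul _]
    refine Finset.sum_congr rfl fun k _ => ?_
    rw [integral_finset_sum _ fun l _ => (aux_integrable_mul (hec_L2 k) (hec_L2 l)).const_mul _]
    exact Finset.sum_congr rfl fun l _ => by rw [integral_const_mul, Ieec k l]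
  rw [E1, E2, E3, E4, add_zero, add_zero]
  congr 1
  · exact Finset.sum_congr rfl fun l _ => mul_comm _ _
  · rw [Finset.sum_comm]
    refine Finset.sum_congr rfl fun l _ => ?_
    rw [Finset.sum_mul]
    exact Finset.sum_congr rfl fun k _ => by ring
end

section
/- In the time-invariant misspecified Kalman setting, assume additionally: (a) for every t there is a deterministic d×d matrix F_t with E[v_t v_tᵀ | 𝔉_{t−1}] = F_t almost surely; (b) the matrix sequences F_t, K_t and K'_t converge (to matrices F, K, K' respectively) as t → ∞; (c) the sequences E[a_t − a'_t] and E[(a_t − a'_t)(a_t − a'_t)ᵀ] converge as t → ∞. Then there exists a constant M > 0 such that for all t ≥ 1, ‖Cov(v'_t, a_{t+1} − a'_{t+1})‖_F < M, where Cov(v'_t, a_{t+1} − a'_{t+1}) := E[(v'_t − E v'_t)(a_{t+1} − a'_{t+1} − E(a_{t+1} − a'_{t+1}))ᵀ]. -/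
open Matrix MeasureTheory Filter

lemma frobNorm_eq_sqrt_sum {m n : Type*} [Fintype m] [Fintype n] (A : Matrix m n ℝ) :
    frobNorm A = Real.sqrt (∑ i, ∑ j, (A i j) ^ 2) := by
  simp [frobNorm, Matrix.trace, Matrix.mul_apply, Matrix.diag, sq, Matrix.transpose_apply]

lemma frobNorm_nonneg' {m n : Type*} [Fintype m] [Fintype n] (A : Matrix m n ℝ) :
    0 ≤ frobNorm A := Real.sqrt_nonneg _

lemma abs_entry_le_frobNorm {m n : Type*} [Fintype m] [Fintype n] (A : Matrix m n ℝ)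
    (i : m) (j : n) : |A i j| ≤ frobNorm A := by
  rw [frobNorm_eq_sqrt_sum, ← Real.sqrt_sq_eq_abs]
  apply Real.sqrt_le_sqrt
  calc (A i j) ^ 2 ≤ ∑ j', (A i j') ^ 2 :=
        Finset.single_le_sum (f := fun j' => (A i j') ^ 2)
          (fun _ _ => sq_nonneg _) (Finset.mem_univ j)
    _ ≤ ∑ i', ∑ j', (A i' j') ^ 2 :=
        Finset.single_le_sum (f := fun i' => ∑ j', (A i' j') ^ 2)
          (fun _ _ => Finset.sum_nonneg fun _ _ => sq_nonneg _) (Finset.mem_univ i)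

lemma entry_tendsto {m n : Type*} [Fintype m] [Fintype n] {M : ℕ → Matrix m n ℝ}
    {L : Matrix m n ℝ} (h : Tendsto (fun t => frobNorm (M t - L)) atTop (nhds 0))
    (i : m) (j : n) : Tendsto (fun t => M t i j) atTop (nhds (L i j)) := by
  have h0 : Tendsto (fun t => M t i j - L i j) atTop (nhds 0) := by
    apply squeeze_zero_norm (fun t => ?_) h
    simpa [Matrix.sub_apply] using abs_entry_le_frobNorm (M t - L) i j
  simpa using h0.add_const (L i j)

lemma integrable_mul_of_memL2 {Ω : Type*} [MeasurableSpace Ω] {μ : Measure Ω} [IsFiniteMeasure μ] {X Y : Ω → ℝ}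
    (hX : MemLp X 2 μ) (hY : MemLp Y 2 μ) : Integrable (fun ω => X ω * Y ω) μ := by
  have h : MemLp (X • Y) 1 μ :=
    hY.smul hX (hpqr := ⟨by rw [inv_one, ENNReal.inv_two_add_inv_two]⟩)
  exact h.integrable le_rfl

lemma cov_integral_eq {Ω : Type*} [MeasurableSpace Ω] {μ : Measure Ω} [IsProbabilityMeasure μ]
    {X Y : Ω → ℝ} (hX : MemLp X 2 μ) (hY : MemLp Y 2 μ) :
    ∫ ω, (X ω - ∫ ω', X ω' ∂μ) * (Y ω - ∫ ω', Y ω' ∂μ) ∂μ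
      = (∫ ω, X ω * Y ω ∂μ) - (∫ ω, X ω ∂μ) * (∫ ω, Y ω ∂μ) := by
  have hXi : Integrable X μ := hX.integrable one_le_two
  have hYi : Integrable Y μ := hY.integrable one_le_two
  have hXY : Integrable (fun ω => X ω * Y ω) μ := integrable_mul_of_memL2 hX hY
  set c1 := ∫ ω', X ω' ∂μ with hc1
  set c2 := ∫ ω', Y ω' ∂μ with hc2
  have hpt : (fun ω => (X ω - c1) * (Y ω - c2))
      = fun ω => X ω * Y ω - c1 * Y ω - c2 * X ω + c1 * c2 := funext fun ω => by ring
  have I1 : Integrable (fun ω => X ω * Y ω - c1 * Y ω) μ := hXY.sub (hYi.const_mul c1)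
  have I2 : Integrable (fun ω => X ω * Y ω - c1 * Y ω - c2 * X ω) μ := I1.sub (hXi.const_mul c2)
  rw [hpt, integral_add I2 (integrable_const _), integral_sub I1 (hXi.const_mul c2),
    integral_sub hXY (hYi.const_mul c1), integral_const_mul, integral_const_mul, integral_const]
  simp [← hc1, ← hc2]
  ring

lemma expand_mul {ι κ₁ κ₂ : Type*} [Fintype ι] [Fintype κ₁] [Fintype κ₂]
    (x : ℝ) (c u : ι → ℝ) (f1 w : κ₁ → ℝ) (f2 z : κ₂ → ℝ) :
    (x + ∑ k, c k * u k) * ((∑ l, f1 l * w l) + ∑ l, f2 l * z l)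
      = ((∑ l, f1 l * (x * w l)) + ∑ l, f2 l * (x * z l))
        + ((∑ k, ∑ l, (c k * f1 l) * (u k * w l)) + ∑ k, ∑ l, (c k * f2 l) * (u k * z l)) := by
  have h1 : x * (∑ l, f1 l * w l) = ∑ l, f1 l * (x * w l) := by
    rw [Finset.mul_sum]; exact Finset.sum_congr rfl fun l _ => by ring
  have h2 : x * (∑ l, f2 l * z l) = ∑ l, f2 l * (x * z l) := by
    rw [Finset.mul_sum]; exact Finset.sum_congr rfl fun l _ => by ring
  have h3 : (∑ k, c k * u k) * (∑ l, f1 l * w l) = ∑ k, ∑ l, (c k * f1 l) * (u k * w l) := by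
    rw [Finset.sum_mul_sum]
    exact Finset.sum_congr rfl fun k _ => Finset.sum_congr rfl fun l _ => by ring
  have h4 : (∑ k, c k * u k) * (∑ l, f2 l * z l) = ∑ k, ∑ l, (c k * f2 l) * (u k * z l) := by
    rw [Finset.sum_mul_sum]
    exact Finset.sum_congr rfl fun k _ => Finset.sum_congr rfl fun l _ => by ring
  calc (x + ∑ k, c k * u k) * ((∑ l, f1 l * w l) + ∑ l, f2 l * z l)
      = x * (∑ l, f1 l * w l) + x * (∑ l, f2 l * z l)
        + ((∑ k, c k * u k) * (∑ l, f1 l * w l) + (∑ k, c k * u k) * (∑ l, f2 l * z l)) := by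
        ring
    _ = _ := by rw [h1, h2, h3, h4]



/-- In the time-invariant misspecified Kalman setting, if `F_t`, `K_t`,
`K'_t` converge and the first two moments of `a_t − a'_t` converge, then the
cross-covariance matrices `Cov(v'_t, a_{t+1} − a'_{t+1})` are uniformly bounded in
Frobenius norm. -/
theorem cov_misspecified_error_state_diff_bounded
    {Ω : Type*} {m0 : MeasurableSpace Ω} (μ : Measure Ω) [IsProbabilityMeasure μ]
    (ℱ : Filtration ℕ m0) (hℱ0 : ℱ 0 = ⊥)
    {d p : ℕ}
    (Z : Matrix (Fin d) (Fin p) ℝ) (T : Matrix (Fin p) (Fin p) ℝ)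
    (K K' : ℕ → Matrix (Fin p) (Fin d) ℝ)
    (L' : ℕ → Matrix (Fin p) (Fin p) ℝ)
    (hL' : ∀ t, L' t = 1 - K' t * Z)
    (y : ℕ → Ω → Fin d → ℝ)
    (hy_meas : ∀ t, StronglyMeasurable[ℱ t] (y t))
    (hy_L2 : ∀ t, MemLp (y t) 2 μ)
    (a a' : ℕ → Ω → Fin p → ℝ)
    (a₁ a₁' : Fin p → ℝ)
    (ha1 : ∀ ω, a 1 ω = a₁) (ha1' : ∀ ω, a' 1 ω = a₁')
    (ha : ∀ t, 1 ≤ t → ∀ ω,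
      a (t + 1) ω = T.mulVec (a t ω) + T.mulVec ((K t).mulVec (y t ω - Z.mulVec (a t ω))))
    (ha' : ∀ t, 1 ≤ t → ∀ ω,
      a' (t + 1) ω
        = T.mulVec (a' t ω) + T.mulVec ((K' t).mulVec (y t ω - Z.mulVec (a' t ω))))
    (ha_L2 : ∀ t, MemLp (a t) 2 μ) (ha'_L2 : ∀ t, MemLp (a' t) 2 μ)
    (v v' : ℕ → Ω → Fin d → ℝ)
    (hv : ∀ t ω, v t ω = y t ω - Z.mulVec (a t ω))
    (hv' : ∀ t ω, v' t ω = y t ω - Z.mulVec (a' t ω))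
    (hcond : ∀ t, 1 ≤ t → μ[y t | ℱ (t - 1)] =ᵐ[μ] fun ω => Z.mulVec (a t ω))
    -- (a) deterministic one-step-ahead forecast error covariance matrices
    (F : ℕ → Matrix (Fin d) (Fin d) ℝ)
    (hF : ∀ t, 1 ≤ t → ∀ i j,
      μ[fun ω => v t ω i * v t ω j | ℱ (t - 1)] =ᵐ[μ] fun _ => F t i j)
    -- (b) convergence of `F_t`, `K_t`, `K'_t`
    (Flim : Matrix (Fin d) (Fin d) ℝ) (Klim K'lim : Matrix (Fin p) (Fin d) ℝ)
    (hFconv : Tendsto (fun t => frobNorm (F t - Flim)) atTop (nhds 0))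
    (hKconv : Tendsto (fun t => frobNorm (K t - Klim)) atTop (nhds 0))
    (hK'conv : Tendsto (fun t => frobNorm (K' t - K'lim)) atTop (nhds 0))
    -- (c) convergence of the first two moments of `a_t − a'_t`
    (mlim : Fin p → ℝ)
    (hmconv : ∀ i, Tendsto (fun t => ∫ ω, (a t ω i - a' t ω i) ∂μ) atTop (nhds (mlim i)))
    (Mlim : Matrix (Fin p) (Fin p) ℝ)
    (hMconv : Tendsto (fun t => frobNorm
        ((Matrix.of fun i j => ∫ ω, (a t ω i - a' t ω i) * (a t ω j - a' t ω j) ∂μ)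
          - Mlim)) atTop (nhds 0)) :
    ∃ M > (0 : ℝ), ∀ t : ℕ, 1 ≤ t →
      frobNorm (Matrix.of fun i j =>
          ∫ ω, (v' t ω i - ∫ ω', v' t ω' i ∂μ)
            * ((a (t + 1) ω j - a' (t + 1) ω j)
              - ∫ ω', (a (t + 1) ω' j - a' (t + 1) ω' j) ∂μ) ∂μ) < M := by

  classical
  have hle : ∀ t, ℱ t ≤ m0 := fun t => ℱ.le t
  -- strong measurability of `a (t+1)`, `a' (t+1)` w.r.t. `ℱ t`
  have hSMa : ∀ t : ℕ, StronglyMeasurable[ℱ t] (a (t + 1))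
      ∧ StronglyMeasurable[ℱ t] (a' (t + 1)) := by
    intro t
    induction t with
    | zero =>
      refine ⟨?_, ?_⟩
      · rw [funext ha1]; exact stronglyMeasurable_const
      · rw [funext ha1']; exact stronglyMeasurable_const
    | succ s ih =>
      have h1 : StronglyMeasurable[ℱ (s + 1)] (a (s + 1)) := ih.1.mono (ℱ.mono (Nat.le_succ s))
      have h2 : StronglyMeasurable[ℱ (s + 1)] (a' (s + 1)) := ih.2.mono (ℱ.mono (Nat.le_succ s))
      have hy' : StronglyMeasurable[ℱ (s + 1)] (y (s + 1)) := hy_meas (s + 1)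
      have hcont : ∀ W : Matrix (Fin p) (Fin d) ℝ,
          Continuous (fun q : (Fin p → ℝ) × (Fin d → ℝ) =>
            T.mulVec q.1 + T.mulVec (W.mulVec (q.2 - Z.mulVec q.1))) := fun W =>
        (continuous_const.matrix_mulVec continuous_fst).add
          (continuous_const.matrix_mulVec (continuous_const.matrix_mulVec
            (continuous_snd.sub (continuous_const.matrix_mulVec continuous_fst))))
      constructor
      · have heq : a (s + 1 + 1) = fun ω => T.mulVec (a (s + 1) ω)
            + T.mulVec ((K (s + 1)).mulVec (y (s + 1) ω - Z.mulVec (a (s + 1) ω))) :=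
          funext (ha (s + 1) (Nat.le_add_left 1 s))
        rw [heq]
        exact (hcont (K (s + 1))).comp_stronglyMeasurable (h1.prodMk hy')
      · have heq : a' (s + 1 + 1) = fun ω => T.mulVec (a' (s + 1) ω)
            + T.mulVec ((K' (s + 1)).mulVec (y (s + 1) ω - Z.mulVec (a' (s + 1) ω))) :=
          funext (ha' (s + 1) (Nat.le_add_left 1 s))
        rw [heq]
        exact (hcont (K' (s + 1))).comp_stronglyMeasurable (h2.prodMk hy')
  have hSMd : ∀ (s : ℕ) (k : Fin p),
      StronglyMeasurable[ℱ s] (fun ω => a (s + 1) ω k - a' (s + 1) ω k) := fun s k =>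
    ((continuous_apply k).comp_stronglyMeasurable (hSMa s).1).sub
      ((continuous_apply k).comp_stronglyMeasurable (hSMa s).2)
  -- L2 membership
  have hZa_L2 : ∀ t, MemLp (fun ω => Z.mulVec (a t ω)) 2 μ := fun t =>
    (LinearMap.toContinuousLinearMap Z.mulVecLin).comp_memLp' (ha_L2 t)
  have hZa'_L2 : ∀ t, MemLp (fun ω => Z.mulVec (a' t ω)) 2 μ := fun t =>
    (LinearMap.toContinuousLinearMap Z.mulVecLin).comp_memLp' (ha'_L2 t)
  have hvL2 : ∀ t, MemLp (v t) 2 μ := fun t => by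
    rw [show v t = fun ω => y t ω - Z.mulVec (a t ω) from funext (hv t)]
    exact (hy_L2 t).sub (hZa_L2 t)
  have hv'L2 : ∀ t, MemLp (v' t) 2 μ := fun t => by
    rw [show v' t = fun ω => y t ω - Z.mulVec (a' t ω) from funext (hv' t)]
    exact (hy_L2 t).sub (hZa'_L2 t)
  have hvC : ∀ t i, MemLp (fun ω => v t ω i) 2 μ := fun t i =>
    (ContinuousLinearMap.proj (R := ℝ) (φ := fun _ : Fin d => ℝ) i).comp_memLp' (hvL2 t)
  have hv'C : ∀ t i, MemLp (fun ω => v' t ω i) 2 μ := fun t i =>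
    (ContinuousLinearMap.proj (R := ℝ) (φ := fun _ : Fin d => ℝ) i).comp_memLp' (hv'L2 t)
  have haC : ∀ t k, MemLp (fun ω => a t ω k) 2 μ := fun t k =>
    (ContinuousLinearMap.proj (R := ℝ) (φ := fun _ : Fin p => ℝ) k).comp_memLp' (ha_L2 t)
  have ha'C : ∀ t k, MemLp (fun ω => a' t ω k) 2 μ := fun t k =>
    (ContinuousLinearMap.proj (R := ℝ) (φ := fun _ : Fin p => ℝ) k).comp_memLp' (ha'_L2 t)
  have hdC : ∀ t k, MemLp (fun ω => a t ω k - a' t ω k) 2 μ := fun t k =>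
    (haC t k).sub (ha'C t k)

  -- conditional expectation of `v (s+1)` given `ℱ s` vanishes
  have hvcond : ∀ (s : ℕ) (i : Fin d), μ[fun ω => v (s + 1) ω i|ℱ s] =ᵐ[μ] 0 := by
    intro s i
    have hyInt : Integrable (y (s + 1)) μ := (hy_L2 (s + 1)).integrable one_le_two
    have hZaInt : Integrable (fun ω => Z.mulVec (a (s + 1) ω)) μ :=
      (hZa_L2 (s + 1)).integrable one_le_two
    have hyA : μ[y (s + 1)|ℱ s] =ᵐ[μ] fun ω => Z.mulVec (a (s + 1) ω) := by
      have h := hcond (s + 1) (Nat.le_add_left 1 s)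
      simpa using h
    have hSMZa : StronglyMeasurable[ℱ s] (fun ω => Z.mulVec (a (s + 1) ω) i) :=
      (continuous_apply i).comp_stronglyMeasurable
        ((continuous_const.matrix_mulVec continuous_id).comp_stronglyMeasurable (hSMa s).1)
    have hyiInt : Integrable (fun ω => y (s + 1) ω i) μ :=
      ((ContinuousLinearMap.proj (R := ℝ) (φ := fun _ : Fin d => ℝ) i).comp_memLp'
        (hy_L2 (s + 1))).integrable one_le_two
    have hZaiInt : Integrable (fun ω => Z.mulVec (a (s + 1) ω) i) μ :=
      ((ContinuousLinearMap.proj (R := ℝ) (φ := fun _ : Fin d => ℝ) i).comp_memLp'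
        (hZa_L2 (s + 1))).integrable one_le_two
    have hyi : (fun ω => Z.mulVec (a (s + 1) ω) i) =ᵐ[μ] μ[fun ω => y (s + 1) ω i|ℱ s] := by
      refine ae_eq_condExp_of_forall_setIntegral_eq (hle s) hyiInt
        (fun u _ _ => hZaiInt.integrableOn) (fun u hu _ => ?_) hSMZa.aestronglyMeasurable
      have h1 : ∫ ω in u, Z.mulVec (a (s + 1) ω) ∂μ = ∫ ω in u, y (s + 1) ω ∂μ := by
        rw [← setIntegral_condExp (hle s) hyInt hu]
        exact setIntegral_congr_ae ((hle s) u hu) (hyA.symm.mono fun ω hω _ => hω)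
      calc ∫ ω in u, Z.mulVec (a (s + 1) ω) i ∂μ
          = (∫ ω in u, Z.mulVec (a (s + 1) ω) ∂μ) i :=
            (ContinuousLinearMap.proj (R := ℝ) (φ := fun _ : Fin d => ℝ) i).integral_comp_comm
              hZaInt.restrict
        _ = (∫ ω in u, y (s + 1) ω ∂μ) i := by rw [h1]
        _ = ∫ ω in u, y (s + 1) ω i ∂μ :=
            ((ContinuousLinearMap.proj (R := ℝ) (φ := fun _ : Fin d => ℝ) i).integral_comp_comm
              hyInt.restrict).symm
    have hsub : μ[fun ω => v (s + 1) ω i|ℱ s] =ᵐ[μ]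
        μ[fun ω => y (s + 1) ω i|ℱ s] - μ[fun ω => Z.mulVec (a (s + 1) ω) i|ℱ s] := by
      have heq : (fun ω => v (s + 1) ω i) = fun ω => y (s + 1) ω i - Z.mulVec (a (s + 1) ω) i := by
        funext ω; rw [hv]; rfl
      rw [heq]
      exact condExp_sub hyiInt hZaiInt _
    have hZaself : μ[fun ω => Z.mulVec (a (s + 1) ω) i|ℱ s] = fun ω => Z.mulVec (a (s + 1) ω) i :=
      condExp_of_stronglyMeasurable (hle s) hSMZa hZaiInt
    filter_upwards [hsub, hyi] with ω h1 h2
    rw [h1, hZaself]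
    simp only [Pi.sub_apply, Pi.zero_apply]
    rw [← h2]
    ring
  -- integral identities at time `s+1`
  have hIv : ∀ (s : ℕ) (i : Fin d), ∫ ω, v (s + 1) ω i ∂μ = 0 := by
    intro s i
    rw [← integral_condExp (hle s) (f := fun ω => v (s + 1) ω i)]
    rw [integral_congr_ae (hvcond s i)]
    simp
  have hIvv : ∀ (s : ℕ) (i l : Fin d),
      ∫ ω, v (s + 1) ω i * v (s + 1) ω l ∂μ = F (s + 1) i l := by
    intro s i l
    have hint : Integrable (fun ω => v (s + 1) ω i * v (s + 1) ω l) μ :=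
      integrable_mul_of_memL2 (hvC (s + 1) i) (hvC (s + 1) l)
    have h := hF (s + 1) (Nat.le_add_left 1 s) i l
    simp only [Nat.add_sub_cancel] at h
    rw [← integral_condExp (hle s) (f := fun ω => v (s + 1) ω i * v (s + 1) ω l), integral_congr_ae h]
    simp
  have hIdv : ∀ (s : ℕ) (k : Fin p) (i : Fin d),
      ∫ ω, (a (s + 1) ω k - a' (s + 1) ω k) * v (s + 1) ω i ∂μ = 0 := by
    intro s k i
    have hint : Integrable (fun ω => (a (s + 1) ω k - a' (s + 1) ω k) * v (s + 1) ω i) μ :=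
      integrable_mul_of_memL2 (hdC (s + 1) k) (hvC (s + 1) i)
    have hpull := condExp_mul_of_stronglyMeasurable_left (hSMd s k) hint
      ((hvC (s + 1) i).integrable one_le_two)
    have h0 : μ[fun ω => (a (s + 1) ω k - a' (s + 1) ω k) * v (s + 1) ω i|ℱ s] =ᵐ[μ]
        (0 : Ω → ℝ) := by
      refine hpull.trans ?_
      filter_upwards [hvcond s i] with ω hω
      simp only [Pi.mul_apply, Pi.zero_apply] at hω ⊢
      rw [hω]; ring
    rw [← integral_condExp (hle s) (f := fun ω => (a (s + 1) ω k - a' (s + 1) ω k) * v (s + 1) ω i), integral_congr_ae h0]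
    simp
  have hIvd : ∀ (s : ℕ) (i : Fin d) (k : Fin p),
      ∫ ω, v (s + 1) ω i * (a (s + 1) ω k - a' (s + 1) ω k) ∂μ = 0 := by
    intro s i k
    rw [← hIdv s k i]
    exact integral_congr_ae (Filter.Eventually.of_forall fun ω => mul_comm _ _)

  -- pointwise identities
  have hP1 : ∀ (t : ℕ) (ω : Ω) (i : Fin d),
      v' t ω i = v t ω i + ∑ k, Z i k * (a t ω k - a' t ω k) := by
    intro t ω i
    rw [hv' t ω, hv t ω]
    simp only [Pi.sub_apply, Matrix.mulVec, dotProduct, mul_sub, Finset.sum_sub_distrib]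
    ring
  have hP2 : ∀ t : ℕ, 1 ≤ t → ∀ (ω : Ω) (j : Fin p),
      a (t + 1) ω j - a' (t + 1) ω j
        = (∑ l, (T * L' t) j l * (a t ω l - a' t ω l))
          + ∑ l, (T * (K t - K' t)) j l * v t ω l := by
    intro t ht ω j
    have hvec : a (t + 1) ω - a' (t + 1) ω
        = (T * L' t).mulVec (a t ω - a' t ω) + (T * (K t - K' t)).mulVec (v t ω) := by
      rw [ha t ht ω, ha' t ht ω, hv t ω, hL' t]
      simp only [Matrix.mulVec_add, Matrix.mulVec_sub, Matrix.add_mulVec, Matrix.sub_mulVec,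
        ← Matrix.mulVec_mulVec, Matrix.one_mulVec, Matrix.mul_sub, Matrix.sub_mul,
        Matrix.mul_one, Matrix.one_mul]
      abel
    have hcomp := congrFun hvec j
    simpa [Matrix.mulVec, dotProduct] using hcomp

  -- mean identities
  have hEX : ∀ (s : ℕ) (i : Fin d),
      ∫ ω, v' (s + 1) ω i ∂μ
        = ∑ k, Z i k * ∫ ω, (a (s + 1) ω k - a' (s + 1) ω k) ∂μ := by
    intro s i
    have h1 : (fun ω => v' (s + 1) ω i)
        = fun ω => v (s + 1) ω i + ∑ k, Z i k * (a (s + 1) ω k - a' (s + 1) ω k) :=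
      funext fun ω => hP1 (s + 1) ω i
    have hi2 : Integrable (fun ω => ∑ k, Z i k * (a (s + 1) ω k - a' (s + 1) ω k)) μ :=
      integrable_finset_sum _ fun k _ => ((hdC (s + 1) k).integrable one_le_two).const_mul _
    rw [h1, integral_add ((hvC (s + 1) i).integrable one_le_two) hi2,
      integral_finset_sum _ fun k _ => ((hdC (s + 1) k).integrable one_le_two).const_mul _,
      hIv s i, zero_add]
    exact Finset.sum_congr rfl fun k _ => integral_const_mul _ _
  have hEY : ∀ (s : ℕ) (j : Fin p),
      ∫ ω, (a (s + 1 + 1) ω j - a' (s + 1 + 1) ω j) ∂μ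
        = ∑ l, (T * L' (s + 1)) j l * ∫ ω, (a (s + 1) ω l - a' (s + 1) ω l) ∂μ := by
    intro s j
    have h1 : (fun ω => a (s + 1 + 1) ω j - a' (s + 1 + 1) ω j)
        = fun ω => (∑ l, (T * L' (s + 1)) j l * (a (s + 1) ω l - a' (s + 1) ω l))
          + ∑ l, (T * (K (s + 1) - K' (s + 1))) j l * v (s + 1) ω l :=
      funext fun ω => hP2 (s + 1) (Nat.le_add_left 1 s) ω j
    have hi1 : Integrable
        (fun ω => ∑ l, (T * L' (s + 1)) j l * (a (s + 1) ω l - a' (s + 1) ω l)) μ :=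
      integrable_finset_sum _ fun l _ => ((hdC (s + 1) l).integrable one_le_two).const_mul _
    have hi2 : Integrable (fun ω => ∑ l, (T * (K (s + 1) - K' (s + 1))) j l * v (s + 1) ω l) μ :=
      integrable_finset_sum _ fun l _ => ((hvC (s + 1) l).integrable one_le_two).const_mul _
    rw [h1, integral_add hi1 hi2,
      integral_finset_sum _ fun l _ => ((hdC (s + 1) l).integrable one_le_two).const_mul _,
      integral_finset_sum _ fun l _ => ((hvC (s + 1) l).integrable one_le_two).const_mul _]
    have h2 : (∑ l, ∫ ω, (T * (K (s + 1) - K' (s + 1))) j l * v (s + 1) ω l ∂μ) = 0 :=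
      Finset.sum_eq_zero fun l _ => by rw [integral_const_mul, hIv s l, mul_zero]
    rw [h2, add_zero]
    exact Finset.sum_congr rfl fun l _ => integral_const_mul _ _

  -- the covariance formula
  have hform : ∀ (s : ℕ) (i : Fin d) (j : Fin p),
      (∫ ω, (v' (s + 1) ω i - ∫ ω', v' (s + 1) ω' i ∂μ)
        * ((a (s + 1 + 1) ω j - a' (s + 1 + 1) ω j)
          - ∫ ω', (a (s + 1 + 1) ω' j - a' (s + 1 + 1) ω' j) ∂μ) ∂μ)
      = (∑ l, (T * (K (s + 1) - K' (s + 1))) j l * F (s + 1) i l)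
        + ∑ k, ∑ l, (Z i k * (T * L' (s + 1)) j l) *
            ((∫ ω, (a (s + 1) ω k - a' (s + 1) ω k) * (a (s + 1) ω l - a' (s + 1) ω l) ∂μ)
              - (∫ ω, (a (s + 1) ω k - a' (s + 1) ω k) ∂μ)
                * ∫ ω, (a (s + 1) ω l - a' (s + 1) ω l) ∂μ) := by
    intro s i j
    refine (cov_integral_eq (hv'C (s + 1) i) (hdC (s + 1 + 1) j)).trans ?_
    have hpt : (fun ω => v' (s + 1) ω i * (a (s + 1 + 1) ω j - a' (s + 1 + 1) ω j)) = fun ω =>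
        ((∑ l, (T * L' (s + 1)) j l * (v (s + 1) ω i * (a (s + 1) ω l - a' (s + 1) ω l)))
          + ∑ l, (T * (K (s + 1) - K' (s + 1))) j l * (v (s + 1) ω i * v (s + 1) ω l))
        + ((∑ k, ∑ l, (Z i k * (T * L' (s + 1)) j l)
              * ((a (s + 1) ω k - a' (s + 1) ω k) * (a (s + 1) ω l - a' (s + 1) ω l)))
          + ∑ k, ∑ l, (Z i k * (T * (K (s + 1) - K' (s + 1))) j l)
              * ((a (s + 1) ω k - a' (s + 1) ω k) * v (s + 1) ω l)) := by
      funext ω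
      rw [hP1 (s + 1) ω i, hP2 (s + 1) (Nat.le_add_left 1 s) ω j]
      exact expand_mul _ _ _ _ _ _ _
    have I1 : Integrable (fun ω => ∑ l, (T * L' (s + 1)) j l
        * (v (s + 1) ω i * (a (s + 1) ω l - a' (s + 1) ω l))) μ :=
      integrable_finset_sum _ fun l _ =>
        (integrable_mul_of_memL2 (hvC (s + 1) i) (hdC (s + 1) l)).const_mul _
    have I2 : Integrable (fun ω => ∑ l, (T * (K (s + 1) - K' (s + 1))) j l
        * (v (s + 1) ω i * v (s + 1) ω l)) μ :=
      integrable_finset_sum _ fun l _ =>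
        (integrable_mul_of_memL2 (hvC (s + 1) i) (hvC (s + 1) l)).const_mul _
    have I3 : Integrable (fun ω => ∑ k, ∑ l, (Z i k * (T * L' (s + 1)) j l)
        * ((a (s + 1) ω k - a' (s + 1) ω k) * (a (s + 1) ω l - a' (s + 1) ω l))) μ :=
      integrable_finset_sum _ fun k _ => integrable_finset_sum _ fun l _ =>
        (integrable_mul_of_memL2 (hdC (s + 1) k) (hdC (s + 1) l)).const_mul _
    have I4 : Integrable (fun ω => ∑ k, ∑ l, (Z i k * (T * (K (s + 1) - K' (s + 1))) j l)
        * ((a (s + 1) ω k - a' (s + 1) ω k) * v (s + 1) ω l)) μ :=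
      integrable_finset_sum _ fun k _ => integrable_finset_sum _ fun l _ =>
        (integrable_mul_of_memL2 (hdC (s + 1) k) (hvC (s + 1) l)).const_mul _
    have hXYint : ∫ ω, v' (s + 1) ω i * (a (s + 1 + 1) ω j - a' (s + 1 + 1) ω j) ∂μ
        = (∑ l, (T * (K (s + 1) - K' (s + 1))) j l * F (s + 1) i l)
          + ∑ k, ∑ l, (Z i k * (T * L' (s + 1)) j l)
              * ∫ ω, (a (s + 1) ω k - a' (s + 1) ω k) * (a (s + 1) ω l - a' (s + 1) ω l) ∂μ := by
      have I12 : Integrable (fun ω => (∑ l, (T * L' (s + 1)) j l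
          * (v (s + 1) ω i * (a (s + 1) ω l - a' (s + 1) ω l)))
          + ∑ l, (T * (K (s + 1) - K' (s + 1))) j l * (v (s + 1) ω i * v (s + 1) ω l)) μ :=
        I1.add I2
      have I34 : Integrable (fun ω => (∑ k, ∑ l, (Z i k * (T * L' (s + 1)) j l)
          * ((a (s + 1) ω k - a' (s + 1) ω k) * (a (s + 1) ω l - a' (s + 1) ω l)))
          + ∑ k, ∑ l, (Z i k * (T * (K (s + 1) - K' (s + 1))) j l)
              * ((a (s + 1) ω k - a' (s + 1) ω k) * v (s + 1) ω l)) μ := I3.add I4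
      rw [hpt, integral_add I12 I34, integral_add I1 I2, integral_add I3 I4,
        integral_finset_sum _ (fun l (_ : l ∈ Finset.univ) =>
          (integrable_mul_of_memL2 (hvC (s + 1) i) (hdC (s + 1) l)).const_mul _),
        integral_finset_sum _ (fun l (_ : l ∈ Finset.univ) =>
          (integrable_mul_of_memL2 (hvC (s + 1) i) (hvC (s + 1) l)).const_mul _),
        integral_finset_sum _ (fun k (_ : k ∈ Finset.univ) => integrable_finset_sum _ fun l _ =>
          (integrable_mul_of_memL2 (hdC (s + 1) k) (hdC (s + 1) l)).const_mul _),
        integral_finset_sum _ (fun k (_ : k ∈ Finset.univ) => integrable_finset_sum _ fun l _ =>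
          (integrable_mul_of_memL2 (hdC (s + 1) k) (hvC (s + 1) l)).const_mul _)]
      have hB1 : (∑ l, ∫ ω, (T * L' (s + 1)) j l
          * (v (s + 1) ω i * (a (s + 1) ω l - a' (s + 1) ω l)) ∂μ) = 0 :=
        Finset.sum_eq_zero fun l _ => by rw [integral_const_mul, hIvd s i l, mul_zero]
      have hB2 : (∑ l, ∫ ω, (T * (K (s + 1) - K' (s + 1))) j l
          * (v (s + 1) ω i * v (s + 1) ω l) ∂μ)
          = ∑ l, (T * (K (s + 1) - K' (s + 1))) j l * F (s + 1) i l :=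
        Finset.sum_congr rfl fun l _ => by rw [integral_const_mul, hIvv s i l]
      have hB3 : (∑ k, ∫ ω, (∑ l, (Z i k * (T * L' (s + 1)) j l)
          * ((a (s + 1) ω k - a' (s + 1) ω k) * (a (s + 1) ω l - a' (s + 1) ω l))) ∂μ)
          = ∑ k, ∑ l, (Z i k * (T * L' (s + 1)) j l)
              * ∫ ω, (a (s + 1) ω k - a' (s + 1) ω k) * (a (s + 1) ω l - a' (s + 1) ω l) ∂μ := by
        refine Finset.sum_congr rfl fun k _ => ?_
        rw [integral_finset_sum _ (fun l (_ : l ∈ Finset.univ) =>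
          (integrable_mul_of_memL2 (hdC (s + 1) k) (hdC (s + 1) l)).const_mul _)]
        exact Finset.sum_congr rfl fun l _ => integral_const_mul _ _
      have hB4 : (∑ k, ∫ ω, (∑ l, (Z i k * (T * (K (s + 1) - K' (s + 1))) j l)
          * ((a (s + 1) ω k - a' (s + 1) ω k) * v (s + 1) ω l)) ∂μ) = 0 := by
        refine Finset.sum_eq_zero fun k _ => ?_
        rw [integral_finset_sum _ (fun l (_ : l ∈ Finset.univ) =>
          (integrable_mul_of_memL2 (hdC (s + 1) k) (hvC (s + 1) l)).const_mul _)]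
        exact Finset.sum_eq_zero fun l _ => by rw [integral_const_mul, hIdv s k l, mul_zero]
      rw [hB1, hB2, hB3, hB4, zero_add, add_zero]
    rw [hXYint, hEX s i, hEY s j, Finset.sum_mul_sum, add_sub_assoc]
    congr 1
    rw [← Finset.sum_sub_distrib]
    refine Finset.sum_congr rfl fun k _ => ?_
    rw [← Finset.sum_sub_distrib]
    exact Finset.sum_congr rfl fun l _ => by ring

  -- entrywise convergence of the data
  have hFe : ∀ i l, Tendsto (fun t => F t i l) atTop (nhds (Flim i l)) :=
    fun i l => entry_tendsto hFconv i l
  have hKe : ∀ k l, Tendsto (fun t => K t k l) atTop (nhds (Klim k l)) :=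
    fun k l => entry_tendsto hKconv k l
  have hK'e : ∀ k l, Tendsto (fun t => K' t k l) atTop (nhds (K'lim k l)) :=
    fun k l => entry_tendsto hK'conv k l
  have hSe : ∀ k l, Tendsto (fun t => ∫ ω, (a t ω k - a' t ω k) * (a t ω l - a' t ω l) ∂μ)
      atTop (nhds (Mlim k l)) := fun k l => entry_tendsto hMconv k l
  have hAe : ∀ (j l : Fin p), Tendsto (fun t => (T * L' t) j l) atTop
      (nhds (((T * (1 - K'lim * Z) : Matrix (Fin p) (Fin p) ℝ)) j l)) := by
    intro j l
    have hLe : ∀ (m : Fin p) (l : Fin p), Tendsto (fun t => L' t m l) atTop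
        (nhds (((1 - K'lim * Z) : Matrix (Fin p) (Fin p) ℝ) m l)) := by
      intro m l
      simp only [hL', Matrix.sub_apply, Matrix.mul_apply]
      exact tendsto_const_nhds.sub
        (tendsto_finset_sum _ fun n _ => (hK'e m n).mul_const (Z n l))
    simp only [Matrix.mul_apply]
    exact tendsto_finset_sum _ fun m _ => (hLe m l).const_mul (T j m)
  have hBe : ∀ (j : Fin p) (l : Fin d), Tendsto (fun t => (T * (K t - K' t)) j l) atTop
      (nhds ((T * (Klim - K'lim)) j l)) := by
    intro j l
    simp only [Matrix.mul_apply, Matrix.sub_apply]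
    exact tendsto_finset_sum _ fun m _ => ((hKe m l).sub (hK'e m l)).const_mul (T j m)
  -- convergence of the covariance entries
  have hc : ∀ (i : Fin d) (j : Fin p), Tendsto (fun t =>
      ∫ ω, (v' t ω i - ∫ ω', v' t ω' i ∂μ)
        * ((a (t + 1) ω j - a' (t + 1) ω j)
          - ∫ ω', (a (t + 1) ω' j - a' (t + 1) ω' j) ∂μ) ∂μ) atTop
      (nhds ((∑ l, (T * (Klim - K'lim)) j l * Flim i l)
        + ∑ k, ∑ l, (Z i k * ((T * (1 - K'lim * Z) : Matrix (Fin p) (Fin p) ℝ)) j l) * (Mlim k l - mlim k * mlim l))) := by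
    intro i j
    have htend : Tendsto (fun t => (∑ l, (T * (K t - K' t)) j l * F t i l)
        + ∑ k, ∑ l, (Z i k * (T * L' t) j l) *
          ((∫ ω, (a t ω k - a' t ω k) * (a t ω l - a' t ω l) ∂μ)
            - (∫ ω, (a t ω k - a' t ω k) ∂μ) * ∫ ω, (a t ω l - a' t ω l) ∂μ)) atTop
        (nhds ((∑ l, (T * (Klim - K'lim)) j l * Flim i l)
          + ∑ k, ∑ l, (Z i k * ((T * (1 - K'lim * Z) : Matrix (Fin p) (Fin p) ℝ)) j l) * (Mlim k l - mlim k * mlim l))) :=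
      (tendsto_finset_sum _ fun l _ => (hBe j l).mul (hFe i l)).add
        (tendsto_finset_sum _ fun k _ => tendsto_finset_sum _ fun l _ =>
          ((hAe j l).const_mul (Z i k)).mul ((hSe k l).sub ((hmconv k).mul (hmconv l))))
    refine Tendsto.congr' ?_ htend
    filter_upwards [eventually_ge_atTop 1] with t ht
    obtain ⟨s, rfl⟩ := Nat.exists_eq_succ_of_ne_zero (Nat.one_le_iff_ne_zero.mp ht)
    exact (hform s i j).symm
  -- convergence of the Frobenius norms, hence boundedness
  have hgt : Tendsto (fun t => frobNorm (Matrix.of fun i j =>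
      ∫ ω, (v' t ω i - ∫ ω', v' t ω' i ∂μ)
        * ((a (t + 1) ω j - a' (t + 1) ω j)
          - ∫ ω', (a (t + 1) ω' j - a' (t + 1) ω' j) ∂μ) ∂μ)) atTop
      (nhds (Real.sqrt (∑ i, ∑ j, ((∑ l, (T * (Klim - K'lim)) j l * Flim i l)
        + ∑ k, ∑ l, (Z i k * ((T * (1 - K'lim * Z) : Matrix (Fin p) (Fin p) ℝ)) j l)
          * (Mlim k l - mlim k * mlim l)) ^ 2))) := by
    have h1 : Tendsto (fun t => ∑ i, ∑ j, ((Matrix.of fun i j =>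
        ∫ ω, (v' t ω i - ∫ ω', v' t ω' i ∂μ)
          * ((a (t + 1) ω j - a' (t + 1) ω j)
            - ∫ ω', (a (t + 1) ω' j - a' (t + 1) ω' j) ∂μ) ∂μ : Matrix (Fin d) (Fin p) ℝ) i j) ^ 2)
        atTop (nhds (∑ i, ∑ j, ((∑ l, (T * (Klim - K'lim)) j l * Flim i l)
          + ∑ k, ∑ l, (Z i k * ((T * (1 - K'lim * Z) : Matrix (Fin p) (Fin p) ℝ)) j l)
            * (Mlim k l - mlim k * mlim l)) ^ 2)) :=
      tendsto_finset_sum _ fun i _ => tendsto_finset_sum _ fun j _ => (hc i j).pow 2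
    have h2 := (Real.continuous_sqrt.tendsto _).comp h1
    simp only [Function.comp_def] at h2
    refine h2.congr fun t => ?_
    rw [frobNorm_eq_sqrt_sum]
  obtain ⟨b, hb⟩ := hgt.bddAbove_range
  have hb0 : (0 : ℝ) ≤ b := le_trans (frobNorm_nonneg' _) (hb (Set.mem_range_self 0))
  refine ⟨b + 1, by linarith, fun t ht => ?_⟩
  have h1 : frobNorm (Matrix.of fun i j =>
      ∫ ω, (v' t ω i - ∫ ω', v' t ω' i ∂μ)
        * ((a (t + 1) ω j - a' (t + 1) ω j)
          - ∫ ω', (a (t + 1) ω' j - a' (t + 1) ω' j) ∂μ) ∂μ) ≤ b :=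
    hb (Set.mem_range_self t)
  linarith
end
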